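/- In the setting of the trunk of a tree T with max degree 3 and k ≥ 3 leaves: every leaf ℓ of Trunk(T) satisfies ℓ = r_i for at least two distinct indices i, where r_i is the closest degree-3 vertex of T to the i-th leaf v_i of T. -/

import Mathlib

open SimpleGraph Walk

namespace Stmt13Aux

variable {α : Type*} {G : SimpleGraph α}

/-- The second vertex of a walk (the start if the walk is nil). -/
def snd' {u v : α} : G.Walk u v → α
  | Walk.nil => u
  | Walk.cons (v := b) _ _ => b

@[simp] lemma snd'_cons {u b v : α} (h : G.Adj u b) (q : G.Walk b v) :
    snd' (Walk.cons h q) = b := rfl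

lemma adj_snd' {u v : α} (p : G.Walk u v) (hp : ¬p.Nil) : G.Adj u (snd' p) := by
  cases p with
  | nil => simp at hp
  | cons h q => exact h

lemma snd'_mem_support {u v : α} (p : G.Walk u v) : snd' p ∈ p.support := by
  cases p with
  | nil => simp [snd']
  | cons h q => rw [snd'_cons, support_cons]; exact List.mem_cons_of_mem _ q.start_mem_support

lemma snd'_append {u v w : α} (p : G.Walk u v) (q : G.Walk v w) (hp : ¬p.Nil) :
    snd' (p.append q) = snd' p := by
  cases p with
  | nil => simp at hp
  | cons h p' => rfl

lemma snd'_concat {u v w : α} (p : G.Walk u v) (h : G.Adj v w) (hp : ¬p.Nil) :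
    snd' (p.concat h) = snd' p :=
  snd'_append p _ hp

/-- The penultimate vertex of a walk. -/
def pen {u v : α} (p : G.Walk u v) : α := snd' p.reverse

lemma pen_not_nil_reverse {u v : α} (p : G.Walk u v) (hp : ¬p.Nil) : ¬p.reverse.Nil := by
  rw [not_nil_iff_lt_length] at hp ⊢
  rwa [length_reverse]

lemma adj_pen {u v : α} (p : G.Walk u v) (hp : ¬p.Nil) : G.Adj (pen p) v :=
  (adj_snd' p.reverse (pen_not_nil_reverse p hp)).symm

lemma pen_mem_support {u v : α} (p : G.Walk u v) : pen p ∈ p.support := by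
  have := snd'_mem_support p.reverse
  rwa [support_reverse, List.mem_reverse] at this

lemma pen_concat {u v w : α} (p : G.Walk u v) (h : G.Adj v w) :
    pen (p.concat h) = v := by
  unfold pen
  rw [reverse_concat]
  rfl

lemma pen_edge {u v : α} (h : G.Adj u v) : pen (Walk.cons h Walk.nil) = u := rfl

lemma IsPath.concat' {u v w : α} {p : G.Walk u v} (hp : p.IsPath) (h : G.Adj v w)
    (hw : w ∉ p.support) : (p.concat h).IsPath := by
  rw [← isPath_reverse_iff, reverse_concat]
  rw [cons_isPath_iff]
  refine ⟨hp.reverse, ?_⟩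
  rwa [support_reverse, List.mem_reverse]

lemma induce_reach (G : SimpleGraph α) (S : Set α) :
    ∀ {a b : α} (p : G.Walk a b) (hp : ∀ x ∈ p.support, x ∈ S),
      (G.induce S).Reachable ⟨a, hp a p.start_mem_support⟩ ⟨b, hp b p.end_mem_support⟩ := by
  intro a b p
  induction p with
  | nil => intro hp; rfl
  | cons h q ih =>
    intro hp
    have hq : ∀ x ∈ q.support, x ∈ S := fun x hx =>
      hp x (by rw [support_cons]; exact List.mem_cons_of_mem _ hx)
    refine Reachable.trans ?_ (ih hq)
    exact Adj.reachable (by simpa using h)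

end Stmt13Aux

open Stmt13Aux

/-- in the setting of the trunk of a tree `T` with maximum degree `3`
and `k ≥ 3` leaves, every leaf `ℓ` of the trunk `S` equals `r v` for at least two
distinct leaves `v` of `T`. -/
theorem stmt_13 {α : Type*} [Fintype α] (T : SimpleGraph α) (hT : T.IsTree)
    (k : ℕ) (hk : 3 ≤ k)
    (hleaves : ({v | ({w | T.Adj v w} : Set α).ncard = 1} : Set α).ncard = k)
    (hdeg : ∀ v : α, ({w | T.Adj v w} : Set α).ncard ≤ 3)
    (r : α → α)
    (hr : ∀ v : α, ({w | T.Adj v w} : Set α).ncard = 1 →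
      ({w | T.Adj (r v) w} : Set α).ncard = 3 ∧
      ∀ (p : T.Walk v (r v)), p.IsPath →
        ∀ w ∈ p.support, ({x | T.Adj w x} : Set α).ncard = 3 → w = r v)
    (S : Set α)
    (hS₁ : ∀ v : α, ({w | T.Adj v w} : Set α).ncard = 1 → r v ∈ S)
    (hS₂ : (T.induce S).Connected)
    (hS₃ : ∀ S' : Set α, (∀ v : α, ({w | T.Adj v w} : Set α).ncard = 1 → r v ∈ S') →
      (T.induce S').Connected → S ⊆ S') :
    ∀ ℓ ∈ S, ({y | y ∈ S ∧ T.Adj ℓ y} : Set α).ncard ≤ 1 →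
      ∃ v w : α, v ≠ w ∧
        ({x | T.Adj v x} : Set α).ncard = 1 ∧
        ({x | T.Adj w x} : Set α).ncard = 1 ∧
        r v = ℓ ∧ r w = ℓ := by
  classical
  intro ℓ hℓS hℓdeg
  obtain ⟨-, huniq⟩ := isTree_iff_existsUnique_path.mp hT
  -- paths inside S between points of S
  have hSwalk : ∀ a b : α, a ∈ S → b ∈ S →
      ∃ p : T.Walk a b, p.IsPath ∧ ∀ x ∈ p.support, x ∈ S := by
    intro a b ha hb
    obtain ⟨q⟩ := hS₂.preconnected ⟨a, ha⟩ ⟨b, hb⟩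
    refine ⟨(q.map (SimpleGraph.Embedding.induce S).toHom).bypass, Walk.bypass_isPath _,
      fun x hx => ?_⟩
    have hx' := (q.map (SimpleGraph.Embedding.induce S).toHom).support_bypass_subset hx
    rw [Walk.support_map] at hx'
    obtain ⟨⟨y, hy⟩, -, rfl⟩ := List.mem_map.mp hx'
    exact hy
  -- ℓ has at most one neighbour in S
  have htwo : ∀ y₁ y₂ : α, y₁ ∈ S → y₂ ∈ S → T.Adj ℓ y₁ → T.Adj ℓ y₂ → y₁ = y₂ := by
    intro y₁ y₂ h1 h2 ha1 ha2
    by_contra hne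
    have hsub : ({y₁, y₂} : Set α) ⊆ {y | y ∈ S ∧ T.Adj ℓ y} := by
      rintro z (rfl | rfl)
      · exact ⟨h1, ha1⟩
      · exact ⟨h2, ha2⟩
    have hle := Set.ncard_le_ncard hsub (Set.toFinite _)
    rw [Set.ncard_pair hne] at hle
    omega
  -- Step 2 : ℓ = r v₀ for some leaf v₀
  have hv₀ : ∃ v₀ : α, ({w | T.Adj v₀ w} : Set α).ncard = 1 ∧ r v₀ = ℓ := by
    by_contra hno
    push_neg at hno
    have hS₁' : ∀ v : α, ({w | T.Adj v w} : Set α).ncard = 1 → r v ∈ S \ {ℓ} := by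
      intro v hv
      exact ⟨hS₁ v hv, by simpa using hno v hv⟩
    have hleafne : ({v | ({w | T.Adj v w} : Set α).ncard = 1} : Set α).Nonempty := by
      apply Set.nonempty_of_ncard_ne_zero
      rw [hleaves]; omega
    obtain ⟨v₀, hv₀leaf⟩ := hleafne
    have hpre : (T.induce (S \ {ℓ})).Preconnected := by
      rintro ⟨a, ha, haℓ⟩ ⟨b, hb, hbℓ⟩
      simp only [Set.mem_singleton_iff] at haℓ hbℓ
      obtain ⟨p, hp, hpS⟩ := hSwalk a b ha hb
      have hℓp : ℓ ∉ p.support := by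
        intro hmem
        have hat : ¬(p.takeUntil ℓ hmem).Nil := not_nil_of_ne haℓ
        have hbd : ¬(p.dropUntil ℓ hmem).Nil := not_nil_of_ne (Ne.symm hbℓ)
        have hadj1 : T.Adj (pen (p.takeUntil ℓ hmem)) ℓ := adj_pen _ hat
        have hadj2 : T.Adj ℓ (snd' (p.dropUntil ℓ hmem)) := adj_snd' _ hbd
        have h1S : pen (p.takeUntil ℓ hmem) ∈ S :=
          hpS _ (support_takeUntil_subset _ _ (pen_mem_support _))
        have h2S : snd' (p.dropUntil ℓ hmem) ∈ S :=
          hpS _ (support_dropUntil_subset _ _ (snd'_mem_support _))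
        have heq : pen (p.takeUntil ℓ hmem) = snd' (p.dropUntil ℓ hmem) :=
          htwo _ _ h1S h2S hadj1.symm hadj2
        have hnodup : ((p.takeUntil ℓ hmem).append (p.dropUntil ℓ hmem)).support.Nodup := by
          rw [take_spec]
          exact hp.support_nodup
        rw [support_append, List.nodup_append] at hnodup
        refine hnodup.2.2 _ (pen_mem_support _) (pen (p.takeUntil ℓ hmem)) ?_ rfl
        have hmem2 := snd'_mem_support (p.dropUntil ℓ hmem)
        rw [support_eq_cons (p.dropUntil ℓ hmem), List.mem_cons] at hmem2
        rcases hmem2 with hmem2 | hmem2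
        · exact absurd (hmem2 ▸ hadj2) T.irrefl
        · rw [heq]; exact hmem2
      have hpS' : ∀ x ∈ p.support, x ∈ S \ {ℓ} :=
        fun x hx => ⟨hpS x hx, fun h => hℓp (h ▸ hx)⟩
      exact induce_reach T (S \ {ℓ}) p hpS'
    have hne : Nonempty ↑(S \ {ℓ}) := ⟨⟨r v₀, hS₁' v₀ hv₀leaf⟩⟩
    have hcon : (T.induce (S \ {ℓ})).Connected := Connected.mk hpre
    have := hS₃ (S \ {ℓ}) hS₁' hcon hℓS
    exact this.2 rfl
  obtain ⟨v₀, hv₀leaf, hrv₀⟩ := hv₀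
  have hdegℓ : ({w | T.Adj ℓ w} : Set α).ncard = 3 := hrv₀ ▸ (hr v₀ hv₀leaf).1
  -- unique paths from ℓ
  have hPex : ∀ u : α, ∃ p : T.Walk ℓ u, p.IsPath := fun u => (huniq ℓ u).exists
  choose P hPpath using hPex
  have hPuniq : ∀ (u : α) (q : T.Walk ℓ u), q.IsPath → q = P u :=
    fun u q hq => (huniq ℓ u).unique hq (hPpath u)
  -- Lemma A
  have heA : ∀ x : α, T.Adj ℓ x → snd' (P x) = x := by
    intro x hx
    have hpath : (Walk.cons hx Walk.nil : T.Walk ℓ x).IsPath := by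
      rw [cons_isPath_iff]
      exact ⟨IsPath.nil, by simp [hx.ne]⟩
    rw [← hPuniq x _ hpath]
    rfl
  -- Lemma B
  have heB : ∀ u u' : α, u ≠ ℓ → u' ≠ ℓ → T.Adj u u' → snd' (P u) = snd' (P u') := by
    intro u u' hu hu' hadj
    by_cases hmem : u' ∈ (P u).support
    · have ht : ((P u).takeUntil u' hmem).IsPath := (hPpath u).takeUntil hmem
      have hnt : ¬((P u).takeUntil u' hmem).Nil := not_nil_of_ne (Ne.symm hu')
      calc snd' (P u)
          = snd' (((P u).takeUntil u' hmem).append ((P u).dropUntil u' hmem)) := by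
            rw [take_spec]
        _ = snd' ((P u).takeUntil u' hmem) := snd'_append _ _ hnt
        _ = snd' (P u') := by rw [hPuniq u' _ ht]
    · have hpath : ((P u).concat hadj).IsPath := IsPath.concat' (hPpath u) hadj hmem
      rw [← hPuniq u' _ hpath, snd'_concat _ _ (not_nil_of_ne (Ne.symm hu))]
  -- Lemma C
  have heC : ∀ {a b : α} (W : T.Walk a b), ℓ ∉ W.support → snd' (P a) = snd' (P b) := by
    intro a b W
    induction W with
    | nil => intro _; rfl
    | @cons u c b h q ih =>
      intro hs
      rw [support_cons, List.mem_cons] at hs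
      push_neg at hs
      have hu : u ≠ ℓ := fun h' => hs.1 h'.symm
      have hc : c ≠ ℓ := fun h' => hs.2 (h' ▸ q.start_mem_support)
      exact (heB u c hu hc h).trans (ih hs.2)
  -- Step 5 : for each neighbour x of ℓ outside S, find a leaf v with r v = ℓ
  have hleafcon : ∀ x : α, T.Adj ℓ x → x ∉ S →
      ∃ v : α, ({w | T.Adj v w} : Set α).ncard = 1 ∧ r v = ℓ ∧ snd' (P v) = x := by
    intro x hxadj hxS
    have hxW : x ∈ {u : α | u ≠ ℓ ∧ snd' (P u) = x} := ⟨hxadj.ne', heA x hxadj⟩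
    obtain ⟨v, hvW, hmax⟩ := Set.exists_max_image {u : α | u ≠ ℓ ∧ snd' (P u) = x}
      (fun u => (P u).length) (Set.toFinite _) ⟨x, hxW⟩
    obtain ⟨hvℓ, hvx⟩ := hvW
    have hPv : ¬(P v).Nil := not_nil_of_ne (Ne.symm hvℓ)
    have hyadj : T.Adj (pen (P v)) v := adj_pen _ hPv
    have hset : {w : α | T.Adj v w} = {pen (P v)} := by
      ext z
      simp only [Set.mem_setOf_eq, Set.mem_singleton_iff]
      constructor
      · intro hz
        by_contra hzy
        by_cases hzℓ : z = ℓ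
        · subst hzℓ
          have hedge : (Walk.cons hz.symm Walk.nil : T.Walk z v).IsPath := by
            rw [cons_isPath_iff]
            exact ⟨IsPath.nil, by simp [hz.ne']⟩
          have := hPuniq v _ hedge
          apply hzy
          rw [← this, pen_edge]
        · by_cases hzsup : z ∈ (P v).support
          · have htp : ((P v).takeUntil z hzsup).IsPath := (hPpath v).takeUntil hzsup
            have hvt : v ∉ ((P v).takeUntil z hzsup).support := by
              intro hvmem
              have hnodup :
                  (((P v).takeUntil z hzsup).append ((P v).dropUntil z hzsup)).support.Nodup := by
                rw [take_spec]
                exact (hPpath v).support_nodup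
              rw [support_append, List.nodup_append] at hnodup
              refine hnodup.2.2 v hvmem v ?_ rfl
              have hd := ((P v).dropUntil z hzsup).end_mem_support
              rw [support_eq_cons, List.mem_cons] at hd
              rcases hd with hd | hd
              · exact absurd hd hz.ne
              · exact hd
            have hcpath : (((P v).takeUntil z hzsup).concat hz.symm).IsPath :=
              IsPath.concat' htp hz.symm hvt
            have hPveq := hPuniq v _ hcpath
            apply hzy
            rw [← hPveq, pen_concat]
          · have hcpath : ((P v).concat hz).IsPath := IsPath.concat' (hPpath v) hz hzsup
            have hPz : (P v).concat hz = P z := hPuniq z _ hcpath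
            have hzW : z ∈ {u : α | u ≠ ℓ ∧ snd' (P u) = x} :=
              ⟨hzℓ, by rw [← hPz, snd'_concat _ _ hPv, hvx]⟩
            have hle := hmax z hzW
            rw [← hPz, length_concat] at hle
            omega
      · rintro rfl
        exact hyadj.symm
    have hvleaf : ({w : α | T.Adj v w} : Set α).ncard = 1 := by
      rw [hset]
      exact Set.ncard_singleton _
    obtain ⟨Q, hQ⟩ := (huniq v (r v)).exists
    have hℓQ : ℓ ∈ Q.support := by
      by_contra hn
      have hrS : r v ∈ S := hS₁ v hvleaf
      obtain ⟨m, hm, hmS⟩ := hSwalk ℓ (r v) hℓS hrS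
      have hmP : m = P (r v) := hPuniq _ m hm
      have hsS : snd' (P (r v)) ∈ S := hmS _ (by rw [hmP]; exact snd'_mem_support _)
      rw [← heC Q hn, hvx] at hsS
      exact hxS hsS
    have hrv : ℓ = r v := (hr v hvleaf).2 Q hQ ℓ hℓQ hdegℓ
    exact ⟨v, hvleaf, hrv.symm, hvx⟩
  -- Step 3 : two neighbours of ℓ outside S
  have hkey := Set.ncard_inter_add_ncard_diff_eq_ncard {w : α | T.Adj ℓ w} S (Set.toFinite _)
  have hint : ({w : α | T.Adj ℓ w} ∩ S).ncard ≤ 1 := by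
    have : {w : α | T.Adj ℓ w} ∩ S = {y | y ∈ S ∧ T.Adj ℓ y} := by
      ext z; simp [and_comm]
    rwa [this]
  have hdiff : 1 < ({w : α | T.Adj ℓ w} \ S).ncard := by
    rw [hdegℓ] at hkey; omega
  obtain ⟨x₁, hx₁, x₂, hx₂, hx12⟩ := (Set.one_lt_ncard (Set.toFinite _)).mp hdiff
  obtain ⟨v, hvleaf, hrv, hvx⟩ := hleafcon x₁ hx₁.1 hx₁.2
  obtain ⟨w, hwleaf, hrw, hwx⟩ := hleafcon x₂ hx₂.1 hx₂.2
  refine ⟨v, w, ?_, hvleaf, hwleaf, hrv, hrw⟩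
  intro hvw
  apply hx12
  rw [← hvx, ← hwx, hvw]
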